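/- Let x₁, x₂, x₃ be positive real numbers and set δ = x₁ + x₂ + x₃. Define the sequence L₁, L₂, L₃, … of positive reals by L_{2i−1} = (x₁²/x₂²)^{i−1}·(x₃/x₂) and L_{2i} = (x₂²/x₁²)^{i−1}·(δx₂/x₁²) for i ≥ 1. Then the infinite continued fraction [L₁, L₂, L₃, …] converges, and its value is (x₁² + δx₃ − x₂² + √((x₂² − x₁² − δx₃)² + 4x₂²x₃δ))/(2δx₂). -/

import Mathlib

open Filter Topology

/-- Finite continued fraction [c₁,…,cₙ] = c₁ + 1/(c₂ + 1/(⋯ + 1/cₙ)). -/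
noncomputable def cfrac : List ℝ → ℝ
  | [] => 0
  | [a] => a
  | a :: b :: t => a + (cfrac (b :: t))⁻¹

lemma cfrac_cons (a : ℝ) (l : List ℝ) (hl : l ≠ []) :
    cfrac (a :: l) = a + (cfrac l)⁻¹ := by
  cases l with
  | nil => exact absurd rfl hl
  | cons b t => rfl

lemma cfrac_pos : ∀ (l : List ℝ), l ≠ [] → (∀ x ∈ l, 0 < x) → 0 < cfrac l
  | [], h, _ => absurd rfl h
  | [a], _, h => by simpa [cfrac] using h a (by simp)
  | a :: b :: t, _, h => by
    have ht : 0 < cfrac (b :: t) :=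
      cfrac_pos (b :: t) (by simp) (fun x hx => h x (by simp [hx]))
    have ha : 0 < a := h a (by simp)
    rw [cfrac_cons a (b :: t) (by simp)]
    positivity

noncomputable def cc (a b r : ℝ) (i : ℕ) : ℝ :=
  if i % 2 = 0 then r ^ (i / 2) * a else (r ^ (i / 2))⁻¹ * b

noncomputable def uu (a b r : ℝ) (m n : ℕ) : ℝ :=
  cfrac ((List.range n).map (fun i => cc a b r (m + i)))

lemma cc_pos (a b r : ℝ) (ha : 0 < a) (hb : 0 < b) (hr : 0 < r) (i : ℕ) :
    0 < cc a b r i := by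
  unfold cc; split <;> positivity

lemma uu_pos (a b r : ℝ) (ha : 0 < a) (hb : 0 < b) (hr : 0 < r) (m n : ℕ) (hn : 1 ≤ n) :
    0 < uu a b r m n := by
  apply cfrac_pos
  · simp only [ne_eq, List.map_eq_nil_iff, List.range_eq_nil]
    omega
  · intro x hx
    simp only [List.mem_map] at hx
    obtain ⟨i, _, rfl⟩ := hx
    exact cc_pos a b r ha hb hr _

lemma uu_one (a b r : ℝ) (m : ℕ) : uu a b r m 1 = cc a b r m := by
  simp [uu, cfrac]

lemma uu_step (a b r : ℝ) (m n : ℕ) (hn : 1 ≤ n) :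
    uu a b r m (n + 1) = cc a b r m + (uu a b r (m + 1) n)⁻¹ := by
  have h1 : (List.range (n+1)).map (fun i => cc a b r (m + i))
      = cc a b r m :: (List.range n).map (fun i => cc a b r (m + 1 + i)) := by
    rw [List.range_succ_eq_map, List.map_cons, List.map_map]
    refine congrArg₂ List.cons (by simp) ?_
    apply List.map_congr_left
    intro i _
    show cc a b r (m + (i + 1)) = cc a b r (m + 1 + i)
    congr 1
    omega
  rw [uu, h1, cfrac_cons]
  · rfl
  · simp only [ne_eq, List.map_eq_nil_iff, List.range_eq_nil]
    omega

lemma cc_zero (a b r : ℝ) : cc a b r 0 = a := by simp [cc]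
lemma cc_one' (a b r : ℝ) : cc a b r 1 = b := by simp [cc]

lemma cc_even (a b r : ℝ) (k : ℕ) : cc a b r (2 * k) = r ^ k * a := by
  have h1 : (2 * k) % 2 = 0 := by omega
  have h2 : (2 * k) / 2 = k := by omega
  simp [cc, h1, h2]

lemma cc_odd (a b r : ℝ) (k : ℕ) : cc a b r (2 * k + 1) = (r ^ k)⁻¹ * b := by
  have h1 : (2 * k + 1) % 2 = 1 := by omega
  have h2 : (2 * k + 1) / 2 = k := by omega
  simp [cc, h1, h2]

lemma uu_scale (a b r : ℝ) (ha : 0 < a) (hb : 0 < b) (hr : 0 < r) :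
    ∀ n, 1 ≤ n → ∀ k,
    uu a b r (2 * k) n = r ^ k * uu a b r 0 n ∧
    uu a b r (2 * k + 1) n = (r ^ k)⁻¹ * uu a b r 1 n := by
  intro n hn
  induction n, hn using Nat.le_induction with
  | base =>
    intro k
    rw [uu_one, uu_one, uu_one, uu_one, cc_even, cc_odd, cc_zero, cc_one']
    exact ⟨rfl, rfl⟩
  | succ n hn ih =>
    intro k
    have hu1 : 0 < uu a b r 1 n := uu_pos a b r ha hb hr 1 n hn
    have hu0 : 0 < uu a b r 0 n := uu_pos a b r ha hb hr 0 n hn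
    have e1 : uu a b r (2 * k) (n + 1)
        = cc a b r (2 * k) + (uu a b r (2 * k + 1) n)⁻¹ := uu_step a b r _ n hn
    have e2 : uu a b r (2 * k + 1) (n + 1)
        = cc a b r (2 * k + 1) + (uu a b r (2 * (k + 1)) n)⁻¹ := by
      have := uu_step a b r (2 * k + 1) n hn
      rwa [show 2 * k + 1 + 1 = 2 * (k + 1) by ring] at this
    have e0 : uu a b r 0 (n + 1) = cc a b r 0 + (uu a b r 1 n)⁻¹ := by
      simpa using uu_step a b r 0 n hn
    have e1' : uu a b r 1 (n + 1) = cc a b r 1 + (uu a b r (2 * 1) n)⁻¹ := by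
      simpa using uu_step a b r 1 n hn
    constructor
    · rw [e1, (ih k).2, e0, cc_even, cc_zero, mul_inv, inv_inv]
      ring
    · rw [e2, (ih (k + 1)).1, e1', (ih 1).1, cc_odd, cc_one', pow_one]
      have h3 : (r ^ (k + 1) * uu a b r 0 n)⁻¹ = (r ^ k)⁻¹ * (r * uu a b r 0 n)⁻¹ := by
        rw [pow_succ, mul_assoc, mul_inv]
      rw [h3]
      ring

lemma uu_rec (a b r : ℝ) (ha : 0 < a) (hb : 0 < b) (hr : 0 < r) (n : ℕ) (hn : 1 ≤ n) :
    uu a b r 0 (n + 2) = a + (b + (r * uu a b r 0 n)⁻¹)⁻¹ := by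
  have e0 : uu a b r 0 (n + 2) = cc a b r 0 + (uu a b r 1 (n + 1))⁻¹ := by
    simpa using uu_step a b r 0 (n + 1) (by omega)
  have e1 : uu a b r 1 (n + 1) = cc a b r 1 + (uu a b r (2 * 1) n)⁻¹ := by
    simpa using uu_step a b r 1 n hn
  have e2 : uu a b r (2 * 1) n = r ^ 1 * uu a b r 0 n :=
    (uu_scale a b r ha hb hr n hn 1).1
  rw [e0, e1, e2, pow_one, cc_zero, cc_one']

lemma mobius_diff (a b r t : ℝ) (hb : 0 < b) (hr : 0 < r)
    (hQ : b * r * t ^ 2 + (1 - a * b * r - r) * t - a = 0)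
    (hbrt : b * r * t + 1 ≠ 0) (s : ℝ) (hs : 0 < s) :
    (a + (b + (r * s)⁻¹)⁻¹) - t = r * (s - t) / ((b * r * s + 1) * (b * r * t + 1)) := by
  have h1 : (0:ℝ) < b * r * s + 1 := by positivity
  have hFs : a + (b + (r * s)⁻¹)⁻¹ = ((a * b * r + r) * s + a) / (b * r * s + 1) := by
    rw [eq_div_iff (ne_of_gt h1)]
    have h2 : b + (r * s)⁻¹ = (b * r * s + 1) / (r * s) := by field_simp
    rw [h2, inv_div]
    field_simp
    ring
  rw [hFs, div_sub' (ne_of_gt h1),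
    div_eq_div_iff (ne_of_gt h1) (mul_ne_zero (ne_of_gt h1) hbrt)]
  linear_combination (-(b * r * s + 1) ^ 2) * hQ

lemma mobius_tendsto (a b r p q : ℝ) (ha : 0 < a) (hb : 0 < b) (hr : 0 < r)
    (hp : 0 < p) (hq : q < 0)
    (hQp : b * r * p ^ 2 + (1 - a * b * r - r) * p - a = 0)
    (hQq : b * r * q ^ 2 + (1 - a * b * r - r) * q - a = 0)
    (s₀ : ℝ) (hs₀ : 0 < s₀) :
    Filter.Tendsto (fun m => (fun s => a + (b + (r * s)⁻¹)⁻¹)^[m] s₀)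
      Filter.atTop (nhds p) := by
  set F : ℝ → ℝ := fun s => a + (b + (r * s)⁻¹)⁻¹ with hF
  have hFpos : ∀ s : ℝ, 0 < s → 0 < F s := by
    intro s hs
    have : 0 < b + (r * s)⁻¹ := by positivity
    simp only [hF]
    positivity
  have hiter : ∀ m, 0 < F^[m] s₀ := by
    intro m
    induction m with
    | zero => simpa using hs₀
    | succ m ih => rw [Function.iterate_succ_apply']; exact hFpos _ ih
  have hsum : b * r * (p + q) = a * b * r + r - 1 := by
    have hne : p - q ≠ 0 := by nlinarith
    have key : (p - q) * (b * r * (p + q) - (a * b * r + r - 1)) = 0 := by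
      linear_combination hQp - hQq
    rcases mul_eq_zero.mp key with h | h
    · exact absurd h hne
    · linarith
  have hbrp : 0 < b * r * p + 1 := by positivity
  have hbrq : b * r * q + 1 ≠ 0 := by
    intro h
    have h2 : b * r * q = -1 := by linarith
    have : r = 0 := by nlinarith [hQq, h2]
    linarith
  set κ : ℝ := (b * r * q + 1) / (b * r * p + 1) with hκ
  have hκabs : |κ| < 1 := by
    rw [hκ, abs_div, abs_of_pos hbrp, div_lt_one hbrp, abs_lt]
    constructor
    · nlinarith [hsum]
    · nlinarith [mul_pos (mul_pos hb hr) (sub_pos.mpr (lt_trans hq hp))]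
  -- the multiplier recursion
  set e : ℕ → ℝ := fun m => (F^[m] s₀ - p) / (F^[m] s₀ - q) with he
  have hsq : ∀ m, 0 < F^[m] s₀ - q := fun m => by
    have := hiter m; linarith
  have hstep : ∀ m, e (m + 1) = κ * e m := by
    intro m
    set s : ℝ := F^[m] s₀ with hsdef
    have hs : 0 < s := hiter m
    have hD : (0:ℝ) < b * r * s + 1 := by positivity
    have hp' : (F s - p) * ((b * r * s + 1) * (b * r * p + 1)) = r * (s - p) := by
      rw [show F s - p = _ from mobius_diff a b r p hb hr hQp (ne_of_gt hbrp) s hs]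
      exact div_mul_cancel₀ _ (mul_ne_zero (ne_of_gt hD) (ne_of_gt hbrp))
    have hq' : (F s - q) * ((b * r * s + 1) * (b * r * q + 1)) = r * (s - q) := by
      rw [show F s - q = _ from mobius_diff a b r q hb hr hQq hbrq s hs]
      exact div_mul_cancel₀ _ (mul_ne_zero (ne_of_gt hD) hbrq)
    have hcross : (F s - p) * ((b * r * p + 1) * (s - q))
        = (b * r * q + 1) * (s - p) * (F s - q) := by
      apply mul_left_cancel₀ (ne_of_gt hD)
      linear_combination (s - q) * hp' - (s - p) * hq'
    have hFq : F s - q ≠ 0 := by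
      have := hFpos s hs; intro h; nlinarith
    have hsq' : (b * r * p + 1) * (s - q) ≠ 0 :=
      mul_ne_zero (ne_of_gt hbrp) (ne_of_gt (hsq m))
    have e1 : e (m + 1) = (F s - p) / (F s - q) := by
      simp only [he, Function.iterate_succ_apply', hsdef]
    have e2 : (F s - p) / (F s - q) = ((b * r * q + 1) * (s - p)) / ((b * r * p + 1) * (s - q)) := by
      rw [div_eq_div_iff hFq hsq']
      linear_combination hcross
    rw [e1, e2, hκ, he]
    rw [div_mul_div_comm]
  have hgeom : ∀ m, e m = κ ^ m * e 0 := by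
    intro m
    induction m with
    | zero => simp
    | succ m ih => rw [hstep m, ih, pow_succ]; ring
  have he0 : Filter.Tendsto e Filter.atTop (nhds 0) := by
    have h1 : Filter.Tendsto (fun m : ℕ => κ ^ m) Filter.atTop (nhds 0) :=
      tendsto_pow_atTop_nhds_zero_of_abs_lt_one hκabs
    have h2 := h1.mul_const (e 0)
    rw [zero_mul] at h2
    exact h2.congr fun m => (hgeom m).symm
  have helt1 : ∀ m, e m < 1 := by
    intro m
    rw [he]
    rw [div_lt_one (hsq m)]
    linarith
  have hform : ∀ m, F^[m] s₀ = (p - q * e m) / (1 - e m) := by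
    intro m
    have h1 : e m * (F^[m] s₀ - q) = F^[m] s₀ - p := by
      rw [he]
      exact div_mul_cancel₀ _ (ne_of_gt (hsq m))
    rw [eq_div_iff (by have := helt1 m; intro h; linarith [h] : (1:ℝ) - e m ≠ 0)]
    linarith [h1]
  have hfinal : Filter.Tendsto (fun m => (p - q * e m) / (1 - e m))
      Filter.atTop (nhds ((p - q * 0) / (1 - 0))) := by
    exact (tendsto_const_nhds.sub (tendsto_const_nhds.mul he0)).div
      (tendsto_const_nhds.sub he0) (by norm_num)
  have : ((p - q * 0) / (1 - 0) : ℝ) = p := by norm_num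
  rw [this] at hfinal
  exact hfinal.congr fun m => (hform m).symm

lemma uu_tendsto (a b r p q : ℝ) (ha : 0 < a) (hb : 0 < b) (hr : 0 < r)
    (hp : 0 < p) (hq : q < 0)
    (hQp : b * r * p ^ 2 + (1 - a * b * r - r) * p - a = 0)
    (hQq : b * r * q ^ 2 + (1 - a * b * r - r) * q - a = 0) :
    Filter.Tendsto (fun n => uu a b r 0 n) Filter.atTop (nhds p) := by
  set F : ℝ → ℝ := fun s => a + (b + (r * s)⁻¹)⁻¹ with hF
  have hodd : ∀ m : ℕ, uu a b r 0 (2 * m + 1) = F^[m] a := by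
    intro m
    induction m with
    | zero => simp [uu_one, cc_zero]
    | succ m ih =>
      have h2 : 2 * (m + 1) + 1 = (2 * m + 1) + 2 := by ring
      rw [h2, uu_rec a b r ha hb hr (2 * m + 1) (by omega), ih,
        Function.iterate_succ_apply']
  have hstart2 : uu a b r 0 2 = a + b⁻¹ := by
    rw [show (2:ℕ) = 1 + 1 from rfl, uu_step a b r 0 1 le_rfl, uu_one, cc_zero,
      show (0:ℕ) + 1 = 1 from rfl, cc_one']
  have heven : ∀ m : ℕ, uu a b r 0 (2 * m + 2) = F^[m] (a + b⁻¹) := by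
    intro m
    induction m with
    | zero => simpa using hstart2
    | succ m ih =>
      have h2 : 2 * (m + 1) + 2 = (2 * m + 2) + 2 := by ring
      rw [h2, uu_rec a b r ha hb hr (2 * m + 2) (by omega), ih,
        Function.iterate_succ_apply']
  have hT1 : Filter.Tendsto (fun m => F^[m] a) Filter.atTop (nhds p) :=
    mobius_tendsto a b r p q ha hb hr hp hq hQp hQq a ha
  have hT2 : Filter.Tendsto (fun m => F^[m] (a + b⁻¹)) Filter.atTop (nhds p) :=
    mobius_tendsto a b r p q ha hb hr hp hq hQp hQq (a + b⁻¹) (by positivity)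
  rw [Metric.tendsto_atTop] at hT1 hT2 ⊢
  intro ε hε
  obtain ⟨N₁, hN₁⟩ := hT1 ε hε
  obtain ⟨N₂, hN₂⟩ := hT2 ε hε
  refine ⟨2 * N₁ + 2 * N₂ + 2, fun n hn => ?_⟩
  rcases Nat.even_or_odd n with he | ho
  · obtain ⟨k, hk⟩ := he
    have hk2 : n = 2 * (k - 1) + 2 := by omega
    rw [hk2, heven]
    exact hN₂ _ (by omega)
  · obtain ⟨k, hk⟩ := ho
    have hk2 : n = 2 * k + 1 := by omega
    rw [hk2, hodd]
    exact hN₁ _ (by omega)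

/-- With δ = x₁ + x₂ + x₃ and L_{2i−1} = (x₁²/x₂²)^{i−1}·(x₃/x₂),
L_{2i} = (x₂²/x₁²)^{i−1}·(δx₂/x₁²), the infinite continued fraction
[L₁, L₂, L₃, …] converges to
(x₁² + δx₃ − x₂² + √((x₂² − x₁² − δx₃)² + 4x₂²x₃δ))/(2δx₂). -/
theorem cfrac_snake_graph_ratio_limit (x₁ x₂ x₃ : ℝ)
    (h₁ : 0 < x₁) (h₂ : 0 < x₂) (h₃ : 0 < x₃) :
    Tendsto
      (fun n : ℕ => cfrac ((List.range n).map
        (fun i => if i % 2 = 0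
          then (x₁ ^ 2 / x₂ ^ 2) ^ (i / 2) * (x₃ / x₂)
          else (x₂ ^ 2 / x₁ ^ 2) ^ (i / 2) * ((x₁ + x₂ + x₃) * x₂ / x₁ ^ 2))))
      atTop
      (𝓝 ((x₁ ^ 2 + (x₁ + x₂ + x₃) * x₃ - x₂ ^ 2 +
          Real.sqrt ((x₂ ^ 2 - x₁ ^ 2 - (x₁ + x₂ + x₃) * x₃) ^ 2
            + 4 * x₂ ^ 2 * x₃ * (x₁ + x₂ + x₃))) /
        (2 * (x₁ + x₂ + x₃) * x₂))) := by

  have hD : (0:ℝ) ≤ (x₂ ^ 2 - x₁ ^ 2 - (x₁ + x₂ + x₃) * x₃) ^ 2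
      + 4 * x₂ ^ 2 * x₃ * (x₁ + x₂ + x₃) := by positivity
  obtain ⟨S, hSdef⟩ : ∃ S : ℝ, S = Real.sqrt ((x₂ ^ 2 - x₁ ^ 2 - (x₁ + x₂ + x₃) * x₃) ^ 2
      + 4 * x₂ ^ 2 * x₃ * (x₁ + x₂ + x₃)) := ⟨_, rfl⟩
  rw [← hSdef]
  have hSnn : 0 ≤ S := hSdef ▸ Real.sqrt_nonneg _
  have hS2 : S ^ 2 = (x₂ ^ 2 - x₁ ^ 2 - (x₁ + x₂ + x₃) * x₃) ^ 2
      + 4 * x₂ ^ 2 * x₃ * (x₁ + x₂ + x₃) := by rw [hSdef]; exact Real.sq_sqrt hD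
  obtain ⟨p, hpdef⟩ : ∃ p : ℝ,
      p = (x₁ ^ 2 + (x₁ + x₂ + x₃) * x₃ - x₂ ^ 2 + S) / (2 * (x₁ + x₂ + x₃) * x₂) := ⟨_, rfl⟩
  rw [← hpdef]
  obtain ⟨q, hqdef⟩ : ∃ q : ℝ,
      q = (x₁ ^ 2 + (x₁ + x₂ + x₃) * x₃ - x₂ ^ 2 - S) / (2 * (x₁ + x₂ + x₃) * x₂) := ⟨_, rfl⟩
  have hc : (0:ℝ) < 4 * x₂ ^ 2 * x₃ * (x₁ + x₂ + x₃) := by positivity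
  have hden : (0:ℝ) < 2 * (x₁ + x₂ + x₃) * x₂ := by positivity
  have hp : 0 < p := by
    rw [hpdef]
    apply div_pos _ hden
    nlinarith [hS2, hSnn, hc, sq_nonneg (S + (x₁ ^ 2 + (x₁ + x₂ + x₃) * x₃ - x₂ ^ 2))]
  have hq : q < 0 := by
    rw [hqdef]
    apply div_neg_of_neg_of_pos _ hden
    nlinarith [hS2, hSnn, hc, sq_nonneg (S - (x₁ ^ 2 + (x₁ + x₂ + x₃) * x₃ - x₂ ^ 2))]
  have hkeyp : (x₁ + x₂ + x₃) * x₂ * p ^ 2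
      + (x₂ ^ 2 - x₁ ^ 2 - (x₁ + x₂ + x₃) * x₃) * p - x₂ * x₃ = 0 := by
    rw [hpdef]
    field_simp
    linear_combination hS2
  have hkeyq : (x₁ + x₂ + x₃) * x₂ * q ^ 2
      + (x₂ ^ 2 - x₁ ^ 2 - (x₁ + x₂ + x₃) * x₃) * q - x₂ * x₃ = 0 := by
    rw [hqdef]
    field_simp
    linear_combination hS2
  have hx1 : x₁ ≠ 0 := ne_of_gt h₁
  have hx2 : x₂ ≠ 0 := ne_of_gt h₂
  have hQp : ((x₁ + x₂ + x₃) * x₂ / x₁ ^ 2) * (x₁ ^ 2 / x₂ ^ 2) * p ^ 2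
      + (1 - (x₃ / x₂) * ((x₁ + x₂ + x₃) * x₂ / x₁ ^ 2) * (x₁ ^ 2 / x₂ ^ 2) - x₁ ^ 2 / x₂ ^ 2) * p
      - x₃ / x₂ = 0 := by
    field_simp
    linear_combination hkeyp
  have hQq : ((x₁ + x₂ + x₃) * x₂ / x₁ ^ 2) * (x₁ ^ 2 / x₂ ^ 2) * q ^ 2
      + (1 - (x₃ / x₂) * ((x₁ + x₂ + x₃) * x₂ / x₁ ^ 2) * (x₁ ^ 2 / x₂ ^ 2) - x₁ ^ 2 / x₂ ^ 2) * q
      - x₃ / x₂ = 0 := by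
    field_simp
    linear_combination hkeyq
  have hfun : ∀ n : ℕ, cfrac ((List.range n).map
        (fun i => if i % 2 = 0
          then (x₁ ^ 2 / x₂ ^ 2) ^ (i / 2) * (x₃ / x₂)
          else (x₂ ^ 2 / x₁ ^ 2) ^ (i / 2) * ((x₁ + x₂ + x₃) * x₂ / x₁ ^ 2)))
      = uu (x₃ / x₂) ((x₁ + x₂ + x₃) * x₂ / x₁ ^ 2) (x₁ ^ 2 / x₂ ^ 2) 0 n := by
    intro n
    rw [uu]
    congr 1
    apply List.map_congr_left
    intro i _
    rw [show (0:ℕ) + i = i from Nat.zero_add i, cc]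
    split
    · rfl
    · have h5 : (x₂ ^ 2 / x₁ ^ 2) ^ (i / 2) = ((x₁ ^ 2 / x₂ ^ 2) ^ (i / 2))⁻¹ := by
        rw [← inv_pow, inv_div]
      rw [h5]
  have hmain := uu_tendsto (x₃ / x₂) ((x₁ + x₂ + x₃) * x₂ / x₁ ^ 2) (x₁ ^ 2 / x₂ ^ 2) p q
    (by positivity) (by positivity) (by positivity) hp hq hQp hQq
  exact Tendsto.congr (fun n => (hfun n).symm) hmain
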